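/- Properness of value functions: let f : ℝⁿ × ℝᵐ → ℝ̄ be proper and convex. If v̄ ∈ dom q₀, i.e. f*(v̄, ·) ≢ +∞, then p_v̄(u) = inf_x (f(x,u) − ⟨v̄,x⟩) is a proper function on ℝᵐ (never takes −∞ and is not identically +∞). Symmetrically, if ū ∈ dom p₀, i.e. f(·, ū) ≢ +∞, then q_ū(v) = inf_y (f*(v,y) − ⟨ū,y⟩) is proper on ℝⁿ. -/

import Mathlib

open scoped BigOperators

noncomputable def dotE {n : ℕ} (v x : Fin n → ℝ) : EReal := ((∑ i, v i * x i : ℝ) : EReal)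

noncomputable def conj {n : ℕ} (h : (Fin n → ℝ) → EReal) (v : Fin n → ℝ) : EReal :=
  ⨆ x, dotE v x - h x

noncomputable def conj2 {n m : ℕ} (f : (Fin n → ℝ) × (Fin m → ℝ) → EReal)
    (v : Fin n → ℝ) (y : Fin m → ℝ) : EReal :=
  ⨆ x, ⨆ u, dotE v x + dotE y u - f (x, u)

def epi {α : Type*} (h : α → EReal) : Set (α × ℝ) := {p | h p.1 ≤ (p.2 : EReal)}

def ConvexFn {α : Type*} [AddCommMonoid α] [Module ℝ α] (h : α → EReal) : Prop :=
  Convex ℝ (epi h)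

def ClosedFn {α : Type*} [TopologicalSpace α] (h : α → EReal) : Prop := IsClosed (epi h)

def ProperFn {α : Type*} (h : α → EReal) : Prop := (∃ x, h x ≠ ⊤) ∧ ∀ x, h x ≠ ⊥

section AuxStmt14

open Set Module

variable {E : Type*} [NormedAddCommGroup E] [NormedSpace ℝ E]


open Set


lemma exists_real_le {x : EReal} (hx : x ≠ ⊤) : ∃ r : ℝ, x ≤ (r : EReal) := by
  rcases eq_or_ne x ⊥ with hb | hb
  · exact ⟨0, hb ▸ bot_le⟩
  · exact ⟨x.toReal, le_of_eq (EReal.coe_toReal hx hb).symm⟩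

lemma dom_convex (h : E → EReal) (hc : Convex ℝ (epi h)) : Convex ℝ {z | h z ≠ ⊤} := by
  intro z hz w hw a b ha hb hab
  obtain ⟨r1, hr1⟩ := exists_real_le hz
  obtain ⟨r2, hr2⟩ := exists_real_le hw
  have h1 : (z, r1) ∈ epi h := hr1
  have h2 : (w, r2) ∈ epi h := hr2
  have := hc h1 h2 ha hb hab
  have hmem : h (a • z + b • w) ≤ ((a * r1 + b * r2 : ℝ) : EReal) := this
  simp only [Set.mem_setOf_eq]
  exact ne_top_of_le_ne_top (EReal.coe_ne_top _) hmem

variable [FiniteDimensional ℝ E]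

lemma bound_near (h : E → EReal) (hc : Convex ℝ (epi h)) (hbot : ∀ z, h z ≠ ⊥)
    {z1 : E} (hz1 : z1 ∈ interior {z | h z ≠ ⊤}) :
    ∃ B : ℝ, ∃ δ : ℝ, 0 < δ ∧ ∀ z, dist z z1 < δ → h z ≤ (B : EReal) := by
  set D := interior {z | h z ≠ ⊤} with hD
  have hDopen : IsOpen D := isOpen_interior
  have hDsub : D ⊆ {z | h z ≠ ⊤} := interior_subset
  have hDconv : Convex ℝ D := (dom_convex h hc).interior
  set g : E → ℝ := fun z => (h z).toReal with hg
  have hcoe : ∀ z ∈ D, ((g z : ℝ) : EReal) = h z := fun z hz =>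
    EReal.coe_toReal (hDsub hz) (hbot z)
  have hCOn : ConvexOn ℝ D g := by
    refine ⟨hDconv, fun z hz w hw a b ha hb hab => ?_⟩
    have h1 : (z, g z) ∈ epi h := le_of_eq (hcoe z hz).symm
    have h2 : (w, g w) ∈ epi h := le_of_eq (hcoe w hw).symm
    have hmem := hc h1 h2 ha hb hab
    have hle : h (a • z + b • w) ≤ ((a * g z + b * g w : ℝ) : EReal) := hmem
    have hzd : a • z + b • w ∈ D := hDconv hz hw ha hb hab
    have := EReal.toReal_le_toReal hle (hbot _) (EReal.coe_ne_top _)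
    rw [EReal.toReal_coe] at this
    exact this
  obtain ⟨bb, hxb, hbC⟩ := exists_mem_interior_convexHull_affineBasis (hDopen.mem_nhds hz1)
  have hbdd : BddAbove (g '' convexHull ℝ (Set.range bb)) :=
    hCOn.bddAbove_convexHull ((subset_convexHull ℝ _).trans hbC)
      ((Set.finite_range bb).image g).bddAbove
  obtain ⟨B, hB⟩ := hbdd
  obtain ⟨δ, hδ, hball⟩ := Metric.isOpen_iff.1 isOpen_interior z1 hxb
  refine ⟨B, δ, hδ, fun z hz => ?_⟩
  have hzhull : z ∈ convexHull ℝ (Set.range bb) := interior_subset (hball hz)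
  have hzD : z ∈ D := hbC hzhull
  have : g z ≤ B := hB ⟨z, hzhull, rfl⟩
  calc h z = ((g z : ℝ) : EReal) := (hcoe z hzD).symm
    _ ≤ (B : EReal) := EReal.coe_le_coe_iff.2 this


lemma not_mem_closure_epi (h : E → EReal) (hc : Convex ℝ (epi h)) (hbot : ∀ z, h z ≠ ⊥)
    {z1 : E} (hz1 : z1 ∈ interior {z | h z ≠ ⊤}) :
    ∃ s : ℝ, (z1, s) ∉ closure (epi h) := by
  obtain ⟨B, δ, hδ, hball⟩ := bound_near h hc hbot hz1
  by_contra hcon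
  push_neg at hcon
  have key : ∀ t : ℝ, h z1 ≤ (t : EReal) := by
    intro t
    set s : ℝ := 2 * t - B - 1 with hs
    have hmem := hcon s
    rw [Metric.mem_closure_iff] at hmem
    obtain ⟨⟨z', t'⟩, hzt, hdist⟩ := hmem (min δ 1) (lt_min hδ one_pos)
    rw [Prod.dist_eq] at hdist
    have hd1 : dist z1 z' < δ := lt_of_le_of_lt (le_max_left _ _) (lt_of_lt_of_le hdist (min_le_left _ _))
    have hd2 : dist s t' < 1 := lt_of_le_of_lt (le_max_right _ _) (lt_of_lt_of_le hdist (min_le_right _ _))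
    have ht' : t' < s + 1 := by
      rw [dist_comm] at hd2
      have := abs_lt.1 (by rwa [Real.dist_eq] at hd2)
      linarith [this.1, this.2]
    set w : E := (2 : ℝ) • z1 - z' with hw
    have hdw : dist w z1 < δ := by
      have : w - z1 = z1 - z' := by rw [hw]; module
      rw [dist_eq_norm, this, ← dist_eq_norm]
      exact hd1
    have hwB : (w, B) ∈ epi h := hball w hdw
    have hz't' : (z', t') ∈ epi h := hzt
    have hcomb := hc hz't' hwB (by norm_num : (0:ℝ) ≤ 1/2) (by norm_num : (0:ℝ) ≤ 1/2) (by norm_num)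
    have hfst : (1/2 : ℝ) • (z', t') + (1/2 : ℝ) • (w, B) = (z1, 1/2 * t' + 1/2 * B) := by
      ext
      · show (1/2 : ℝ) • z' + (1/2 : ℝ) • w = z1
        rw [hw]; module
      · rfl
    rw [hfst] at hcomb
    have h1 : h z1 ≤ ((1/2 * t' + 1/2 * B : ℝ) : EReal) := hcomb
    have h2 : (1/2 : ℝ) * t' + 1/2 * B ≤ t := by
      rw [hs] at ht'; linarith
    exact le_trans h1 (EReal.coe_le_coe_iff.2 h2)
  have : h z1 = ⊥ := by
    rcases eq_or_ne (h z1) ⊥ with hb | hb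
    · exact hb
    · exfalso
      have h1 : ((h z1).toReal : EReal) ≤ h z1 := EReal.coe_toReal_le hb
      have h2 := key ((h z1).toReal - 1)
      have := le_trans h1 h2
      rw [EReal.coe_le_coe_iff] at this
      linarith
  exact hbot z1 this

lemma minorant_of_sep (h : E → EReal) (hc : Convex ℝ (epi h)) (hbot : ∀ z, h z ≠ ⊥)
    {z1 : E} (hz1 : h z1 ≠ ⊤) {s : ℝ} (hs : (z1, s) ∉ closure (epi h)) :
    ∃ (ℓ : E →L[ℝ] ℝ) (c : ℝ), ∀ z, ((ℓ z + c : ℝ) : EReal) ≤ h z := by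
  have hCconv : Convex ℝ (closure (epi h)) := hc.closure
  obtain ⟨ℓ0, u, hltu, hus⟩ := geometric_hahn_banach_closed_point hCconv isClosed_closure hs
  set g : E →L[ℝ] ℝ := ℓ0.comp (ContinuousLinearMap.inl ℝ E ℝ) with hg
  set c0 : ℝ := ℓ0 (0, 1) with hc0
  have hdecomp : ∀ (z : E) (t : ℝ), ℓ0 (z, t) = g z + t * c0 := by
    intro z t
    have : (z, t) = ((z, (0:ℝ)) : E × ℝ) + t • (((0:E), (1:ℝ)) : E × ℝ) := by
      simp [Prod.ext_iff]
    rw [this, map_add, map_smul]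
    simp [hg, hc0, smul_eq_mul]
  set r1 : ℝ := (h z1).toReal with hr1
  have hz1r : h z1 ≤ (r1 : EReal) := EReal.le_coe_toReal hz1
  have hepi1 : (z1, r1) ∈ epi h := hz1r
  have hlt : ∀ p ∈ epi h, ℓ0 p < u := fun p hp => hltu p (subset_closure hp)
  have hc0le : c0 ≤ 0 := by
    by_contra hpos
    push_neg at hpos
    set t : ℝ := max 0 ((u - g z1 - r1 * c0) / c0) with ht
    have htnn : 0 ≤ t := le_max_left _ _
    have hmem : (z1, r1 + t) ∈ epi h := by
      show h z1 ≤ ((r1 + t : ℝ) : EReal)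
      exact le_trans hz1r (EReal.coe_le_coe_iff.2 (by linarith))
    have := hlt _ hmem
    rw [hdecomp] at this
    have h2 : (u - g z1 - r1 * c0) / c0 ≤ t := le_max_right _ _
    rw [div_le_iff₀ hpos] at h2
    nlinarith
  have hc0ne : c0 ≠ 0 := by
    intro h0
    have h1 := hlt _ hepi1
    rw [hdecomp] at h1
    rw [hdecomp] at hus
    rw [h0] at h1 hus
    simp at h1 hus
    linarith
  have hc0neg : c0 < 0 := lt_of_le_of_ne hc0le hc0ne
  refine ⟨(-c0⁻¹) • g, u / c0, fun z => ?_⟩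
  rcases eq_or_ne (h z) ⊤ with htop | htop
  · rw [htop]; exact le_top
  · set r : ℝ := (h z).toReal with hr
    have hzr : ((r : ℝ) : EReal) = h z := EReal.coe_toReal htop (hbot z)
    have hepiz : (z, r) ∈ epi h := le_of_eq hzr.symm
    have hzlt := hlt _ hepiz
    rw [hdecomp] at hzlt
    have hineq : (-c0⁻¹) * g z + u / c0 ≤ r := by
      rw [div_eq_mul_inv]
      have hinv : c0⁻¹ < 0 := inv_neg''.2 hc0neg
      have h3 : c0⁻¹ * u < c0⁻¹ * (g z + r * c0) := mul_lt_mul_of_neg_left hzlt hinv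
      have h4 : c0⁻¹ * (g z + r * c0) = c0⁻¹ * g z + r := by
        rw [mul_add, mul_comm r c0, ← mul_assoc, inv_mul_cancel₀ hc0ne, one_mul]
      linarith
    have : ((((-c0⁻¹) • g) z + u / c0 : ℝ) : EReal) ≤ ((r : ℝ) : EReal) := by
      apply EReal.coe_le_coe_iff.2
      simpa using hineq
    exact le_of_le_of_eq this hzr

lemma minorant_interior_case (h : E → EReal) (hc : Convex ℝ (epi h)) (hbot : ∀ z, h z ≠ ⊥)
    (hne : (interior {z | h z ≠ ⊤}).Nonempty) :
    ∃ (ℓ : E →L[ℝ] ℝ) (c : ℝ), ∀ z, ((ℓ z + c : ℝ) : EReal) ≤ h z := by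
  obtain ⟨z1, hz1⟩ := hne
  obtain ⟨s, hs⟩ := not_mem_closure_epi h hc hbot hz1
  exact minorant_of_sep h hc hbot (interior_subset hz1) hs

lemma minorant_main (h : E → EReal) (hc : Convex ℝ (epi h)) (hbot : ∀ z, h z ≠ ⊥)
    {z0 : E} (hz0 : h z0 ≠ ⊤) :
    ∃ (ℓ : E →L[ℝ] ℝ) (c : ℝ), ∀ z, ((ℓ z + c : ℝ) : EReal) ≤ h z := by
  set N := finrank ℝ E with hN
  -- induction on codimension of the affine span of the domain
  suffices H : ∀ (k : ℕ) (h : E → EReal), Convex ℝ (epi h) → (∀ z, h z ≠ ⊥) →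
      ∀ z0 : E, h z0 ≠ ⊤ →
      N - finrank ℝ (affineSpan ℝ {z | h z ≠ ⊤}).direction ≤ k →
      ∃ (ℓ : E →L[ℝ] ℝ) (c : ℝ), ∀ z, ((ℓ z + c : ℝ) : EReal) ≤ h z by
    exact H N h hc hbot z0 hz0 (Nat.sub_le _ _)
  intro k
  induction k with
  | zero =>
    intro h hc hbot z0 hz0 hk
    apply minorant_interior_case h hc hbot
    rw [(dom_convex h hc).interior_nonempty_iff_affineSpan_eq_top]
    have hdle := Submodule.finrank_le (affineSpan ℝ {z | h z ≠ ⊤}).direction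
    have hd : finrank ℝ (affineSpan ℝ {z | h z ≠ ⊤}).direction = N := by omega
    have hdir : (affineSpan ℝ {z | h z ≠ ⊤}).direction = ⊤ :=
      Submodule.eq_top_of_finrank_eq (by rw [hd])
    rw [← AffineSubspace.direction_eq_top_iff_of_nonempty ⟨z0, subset_affineSpan ℝ _ hz0⟩]
    exact hdir
  | succ k ih =>
    intro h hc hbot z0 hz0 hk
    by_cases hne : (interior {z | h z ≠ ⊤}).Nonempty
    · exact minorant_interior_case h hc hbot hne
    · -- domain is contained in a proper affine subspace
      set A := affineSpan ℝ {z | h z ≠ ⊤} with hA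
      set W := A.direction with hW
      have hz0A : z0 ∈ A := subset_affineSpan ℝ _ hz0
      have hAne : (A : Set E).Nonempty := ⟨z0, hz0A⟩
      have hAnetop : A ≠ ⊤ := by
        intro htop
        apply hne
        rw [(dom_convex h hc).interior_nonempty_iff_affineSpan_eq_top]
        exact htop
      have hWnetop : W ≠ ⊤ := by
        intro htop
        exact hAnetop ((AffineSubspace.direction_eq_top_iff_of_nonempty hAne).1 htop)
      obtain ⟨φ, hφne, hφmap⟩ :=
        Submodule.exists_dual_map_eq_bot_of_lt_top (lt_top_iff_ne_top.2 hWnetop) inferInstance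
      have hφW : ∀ w ∈ W, φ w = 0 := by
        intro w hw
        have : φ w ∈ W.map φ := Submodule.mem_map_of_mem hw
        rw [hφmap] at this
        simpa using this
      obtain ⟨a0, ha0⟩ := DFunLike.ne_iff.1 hφne
      simp only [LinearMap.zero_apply] at ha0
      set a : E := (φ a0)⁻¹ • a0 with ha
      have hφa : φ a = 1 := by
        rw [ha, map_smul, smul_eq_mul, inv_mul_cancel₀ ha0]
      set b : ℝ := φ z0 with hb
      have hφdom : ∀ z, h z ≠ ⊤ → φ z = b := by
        intro z hz
        have hzA : z ∈ A := subset_affineSpan ℝ _ hz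
        have : z - z0 ∈ W := AffineSubspace.vsub_mem_direction hzA hz0A
        have h0 := hφW _ this
        rw [map_sub] at h0
        rw [hb]; linarith
      set P : E → E := fun z => z + (b - φ z) • a with hP
      have hPdom : ∀ z, h z ≠ ⊤ → P z = z := by
        intro z hz
        simp [hP, hφdom z hz]
      set h' : E → EReal := fun z => h (P z) with hh'
      have haff : ∀ (p q : E) (α β : ℝ), α + β = 1 →
          P (α • p + β • q) = α • P p + β • P q := by
        intro p q α β hαβ
        simp only [hP, map_add, map_smul, smul_eq_mul]
        have : b - (α * φ p + β * φ q) = α * (b - φ p) + β * (b - φ q) := by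
          have : α * b + β * b = b := by
            rw [← add_mul, hαβ, one_mul]
          linarith [this]
        rw [this]
        module
      have hc' : Convex ℝ (epi h') := by
        rintro ⟨p, sp⟩ hp ⟨q, sq⟩ hq α β hα hβ hαβ
        have hp' : (P p, sp) ∈ epi h := hp
        have hq' : (P q, sq) ∈ epi h := hq
        have := hc hp' hq' hα hβ hαβ
        show h' (α • p + β • q) ≤ ((α * sp + β * sq : ℝ) : EReal)
        rw [hh']
        simp only []
        rw [haff p q α β hαβ]
        exact this
      have hbot' : ∀ z, h' z ≠ ⊥ := fun z => hbot _
      have hz0' : h' z0 ≠ ⊤ := by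
        rw [hh']
        simp only []
        rw [hPdom z0 hz0]
        exact hz0
      -- the affine span of the new domain is strictly bigger
      have hdomsub : {z | h z ≠ ⊤} ⊆ {z | h' z ≠ ⊤} := by
        intro z hz
        simp only [mem_setOf_eq] at hz ⊢
        rw [hh']; simp only []; rw [hPdom z hz]; exact hz
      have hz0a : z0 + a ∈ {z | h' z ≠ ⊤} := by
        simp only [mem_setOf_eq, hh']
        have : P (z0 + a) = z0 := by
          simp only [hP, map_add, hφa, hb]
          module
        rw [this]
        exact hz0
      set A' := affineSpan ℝ {z | h' z ≠ ⊤} with hA'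
      set W' := A'.direction with hW'
      have hAA' : A ≤ A' := affineSpan_mono ℝ hdomsub
      have hWW' : W ≤ W' := AffineSubspace.direction_le hAA'
      have haW' : a ∈ W' := by
        have h1 : z0 + a ∈ A' := subset_affineSpan ℝ _ hz0a
        have h2 : z0 ∈ A' := hAA' hz0A
        have := AffineSubspace.vsub_mem_direction h1 h2
        simpa using this
      have haW : a ∉ W := by
        intro haw
        have := hφW a haw
        rw [hφa] at this
        exact one_ne_zero this
      have hlt : W < W' := lt_of_le_of_ne hWW' (by
        intro heq
        exact haW (heq ▸ haW'))
      have hfr : finrank ℝ W < finrank ℝ W' := Submodule.finrank_lt_finrank_of_lt hlt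
      have hk' : N - finrank ℝ W' ≤ k := by omega
      obtain ⟨ℓ, c, hℓ⟩ := ih h' hc' hbot' z0 hz0' hk'
      refine ⟨ℓ, c, fun z => ?_⟩
      rcases eq_or_ne (h z) ⊤ with htop | htop
      · rw [htop]; exact le_top
      · have := hℓ z
        rw [hh'] at this
        simp only [] at this
        rwa [hPdom z htop] at this


-- EReal helpers
lemma helper1 {a bb C : ℝ} {F : EReal} (hF : F ≠ ⊥)
    (hle : (a : EReal) + (bb : EReal) - F ≤ (C : EReal)) :
    ((bb - C : ℝ) : EReal) ≤ F - (a : EReal) := by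
  rcases eq_or_ne F ⊤ with hT | hT
  · rw [hT, EReal.top_sub_coe]; exact le_top
  · lift F to ℝ using ⟨hT, hF⟩
    rw [show (a : EReal) + (bb : EReal) - (F : EReal) = ((a + bb - F : ℝ) : EReal) by norm_cast]
      at hle
    rw [show (F : EReal) - (a : EReal) = ((F - a : ℝ) : EReal) by norm_cast]
    rw [EReal.coe_le_coe_iff] at hle
    exact EReal.coe_le_coe_iff.2 (by linarith)

lemma helper2 {s t : ℝ} {x : EReal} (hs : (s : EReal) ≤ x) :
    ((s - t : ℝ) : EReal) ≤ x - (t : EReal) := by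
  rcases eq_or_ne x ⊤ with hT | hT
  · rw [hT, EReal.top_sub_coe]; exact le_top
  · have hb : x ≠ ⊥ := fun hbb => by simp [hbb] at hs
    lift x to ℝ using ⟨hT, hb⟩
    rw [EReal.coe_le_coe_iff] at hs
    rw [show (x : EReal) - (t : EReal) = ((x - t : ℝ) : EReal) by norm_cast]
    exact EReal.coe_le_coe_iff.2 (by linarith)

lemma helper3 {A c : ℝ} {F : EReal} (h : ((A + c : ℝ) : EReal) ≤ F) :
    (A : EReal) - F ≤ ((-c : ℝ) : EReal) := by
  rcases eq_or_ne F ⊤ with hT | hT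
  · rw [hT, EReal.sub_top]; exact bot_le
  · have hb : F ≠ ⊥ := fun hbb => by simp [hbb] at h
    lift F to ℝ using ⟨hT, hb⟩
    rw [EReal.coe_le_coe_iff] at h
    rw [show (A : EReal) - (F : EReal) = ((A - F : ℝ) : EReal) by norm_cast]
    exact EReal.coe_le_coe_iff.2 (by linarith)

lemma sub_coe_ne_top {x : EReal} (hx : x ≠ ⊤) (r : ℝ) : x - (r : EReal) ≠ ⊤ := by
  rw [sub_eq_add_neg, ← EReal.coe_neg]
  exact (EReal.add_lt_top hx (EReal.coe_ne_top _)).ne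

-- linear functional decomposition on a product of pi types
lemma decomp {n m : ℕ} (ℓ : ((Fin n → ℝ) × (Fin m → ℝ)) →L[ℝ] ℝ) (x : Fin n → ℝ)
    (u : Fin m → ℝ) :
    ℓ (x, u) = (∑ i, x i * ℓ (Pi.single i 1, 0)) + ∑ j, u j * ℓ (0, Pi.single j 1) := by
  have hsplit : ℓ (x, u) = ℓ (x, 0) + ℓ (0, u) := by
    rw [← map_add]
    congr 1
    simp [Prod.ext_iff]
  set g1 : (Fin n → ℝ) →ₗ[ℝ] ℝ := ℓ.toLinearMap.comp (LinearMap.inl ℝ _ _) with hg1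
  set g2 : (Fin m → ℝ) →ₗ[ℝ] ℝ := ℓ.toLinearMap.comp (LinearMap.inr ℝ _ _) with hg2
  have h1 : ℓ (x, 0) = ∑ i, x i * ℓ (Pi.single i 1, 0) := by
    have := LinearMap.pi_apply_eq_sum_univ g1 x
    simp only [hg1, LinearMap.coe_comp, Function.comp_apply, LinearMap.inl_apply,
      ContinuousLinearMap.coe_coe] at this
    rw [this]
    refine Finset.sum_congr rfl fun i _ => ?_
    rw [smul_eq_mul]
    have : (fun j => if i = j then (1:ℝ) else 0) = Pi.single i 1 := by
      funext j
      by_cases hij : i = j <;> simp [Pi.single_apply, hij, Ne.symm]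
    rw [this]
  have h2 : ℓ (0, u) = ∑ j, u j * ℓ (0, Pi.single j 1) := by
    have := LinearMap.pi_apply_eq_sum_univ g2 u
    simp only [hg2, LinearMap.coe_comp, Function.comp_apply, LinearMap.inr_apply,
      ContinuousLinearMap.coe_coe] at this
    rw [this]
    refine Finset.sum_congr rfl fun j _ => ?_
    rw [smul_eq_mul]
    have : (fun i => if j = i then (1:ℝ) else 0) = Pi.single j 1 := by
      funext i
      by_cases hij : j = i <;> simp [Pi.single_apply, hij, Ne.symm]
    rw [this]
  rw [hsplit, h1, h2]


end AuxStmt14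

/-- for proper convex `f`, if `f*(v̄,·) ≢ +∞` then `p_v̄` is proper,
and if `f(·,ū) ≢ +∞` then `q_ū` is proper. -/
theorem stmt14 {n m : ℕ} (f : (Fin n → ℝ) × (Fin m → ℝ) → EReal)
    (hproper : ProperFn f) (hconvex : ConvexFn f) :
    (∀ vb : Fin n → ℝ, (∃ y : Fin m → ℝ, conj2 f vb y ≠ ⊤) →
      ProperFn (fun u : Fin m → ℝ => ⨅ x : Fin n → ℝ, f (x, u) - dotE vb x)) ∧
    (∀ ub : Fin m → ℝ, (∃ x : Fin n → ℝ, f (x, ub) ≠ ⊤) →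
      ProperFn (fun v : Fin n → ℝ => ⨅ y : Fin m → ℝ, conj2 f v y - dotE ub y)) := by
  obtain ⟨⟨z0, hz0⟩, hbot⟩ := hproper
  constructor
  · rintro vb ⟨y, hy⟩
    obtain ⟨C, hC⟩ := exists_real_le hy
    constructor
    · -- not identically ⊤
      refine ⟨z0.2, ?_⟩
      show (⨅ x, f (x, z0.2) - dotE vb x) ≠ ⊤
      have hterm : f (z0.1, z0.2) - dotE vb z0.1 ≠ ⊤ := by
        have : f (z0.1, z0.2) ≠ ⊤ := by simpa using hz0
        exact sub_coe_ne_top this _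
      have hle : (⨅ x, f (x, z0.2) - dotE vb x) ≤ f (z0.1, z0.2) - dotE vb z0.1 :=
        iInf_le _ z0.1
      exact ne_top_of_le_ne_top hterm hle
    · -- never ⊥
      intro u
      show (⨅ x, f (x, u) - dotE vb x) ≠ ⊥
      have hlb : ∀ x, ((( ∑ j, y j * u j) - C : ℝ) : EReal) ≤ f (x, u) - dotE vb x := by
        intro x
        have hterm : dotE vb x + dotE y u - f (x, u) ≤ conj2 f vb y := by
          refine le_trans ?_ (le_iSup _ x)
          exact le_iSup (fun u' => dotE vb x + dotE y u' - f (x, u')) u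
        exact helper1 (hbot _) (le_trans hterm hC)
      have : ((( ∑ j, y j * u j) - C : ℝ) : EReal) ≤ ⨅ x, f (x, u) - dotE vb x :=
        le_iInf hlb
      intro hbb
      rw [hbb] at this
      exact absurd (le_bot_iff.1 this) (EReal.coe_ne_bot _)
  · rintro ub ⟨x0, hx0⟩
    have hr0 : ((f (x0, ub)).toReal : EReal) = f (x0, ub) :=
      EReal.coe_toReal hx0 (hbot _)
    set r0 : ℝ := (f (x0, ub)).toReal with hr0def
    constructor
    · -- not identically ⊤ : uses the affine minorant of f
      obtain ⟨ℓ, c, hℓ⟩ := minorant_main f hconvex hbot hz0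
      set v : Fin n → ℝ := fun i => ℓ (Pi.single i 1, 0) with hv
      set yy : Fin m → ℝ := fun j => ℓ (0, Pi.single j 1) with hyy
      have hkey : ∀ (x : Fin n → ℝ) (u : Fin m → ℝ),
          dotE v x + dotE yy u = ((ℓ (x, u) : ℝ) : EReal) := by
        intro x u
        rw [decomp ℓ x u]
        simp only [dotE]
        norm_cast
        simp only [hv, hyy]
        congr 1
        · exact Finset.sum_congr rfl fun i _ => mul_comm _ _
        · exact Finset.sum_congr rfl fun j _ => mul_comm _ _
      have hconj : conj2 f v yy ≤ ((-c : ℝ) : EReal) := by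
        simp only [conj2]
        refine iSup_le fun x => iSup_le fun u => ?_
        rw [hkey x u]
        exact helper3 (hℓ (x, u))
      refine ⟨v, ?_⟩
      show (⨅ y, conj2 f v y - dotE ub y) ≠ ⊤
      have h0 : conj2 f v yy - dotE ub yy ≠ ⊤ :=
        sub_coe_ne_top (ne_top_of_le_ne_top (EReal.coe_ne_top _) hconj) _
      exact ne_top_of_le_ne_top h0 (iInf_le _ yy)
    · -- never ⊥
      intro v
      show (⨅ y, conj2 f v y - dotE ub y) ≠ ⊥
      have hlb : ∀ y, (((∑ i, v i * x0 i) - r0 : ℝ) : EReal) ≤ conj2 f v y - dotE ub y := by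
        intro y
        have hterm : dotE v x0 + dotE y ub - f (x0, ub) ≤ conj2 f v y := by
          refine le_trans ?_ (le_iSup _ x0)
          exact le_iSup (fun u' => dotE v x0 + dotE y u' - f (x0, u')) ub
        have h1 : (((∑ i, v i * x0 i) + (∑ j, y j * ub j) - r0 : ℝ) : EReal) ≤ conj2 f v y := by
          refine le_trans (le_of_eq ?_) hterm
          simp only [dotE, ← hr0]
          norm_cast
        have := helper2 (t := ∑ j, y j * ub j) h1
        refine le_trans (le_of_eq ?_) (le_trans this (le_of_eq ?_))
        · norm_cast
          ring
        · have e : (∑ j, y j * ub j) = ∑ j, ub j * y j :=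
            Finset.sum_congr rfl fun j _ => mul_comm _ _
          simp only [dotE]
          rw [e]
      have : (((∑ i, v i * x0 i) - r0 : ℝ) : EReal) ≤ ⨅ y, conj2 f v y - dotE ub y :=
        le_iInf hlb
      intro hbb
      rw [hbb] at this
      exact absurd (le_bot_iff.1 this) (EReal.coe_ne_bot _)
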